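/- Let λ be an unrefinable partition with λ_t = 2n−4 for some n ≥ 6, exactly n−2 parts, and exactly n−2 missing parts, such that n−2 is not a part of λ and for all x ≠ n−2 with 1 ≤ x ≤ 2n−4, x ∈ λ iff 2n−4 − x ∉ λ. Then the total number of cells of the Young diagram KN(S_λ) equals 3n − 3. -/

import Mathlib

/-- A partition into distinct parts, encoded as a `Finset ℕ` of its parts, is *refinable*
if some part can be replaced by two or more distinct positive integers, none of which is
already a part, summing to it. -/
def Refinable (P : Finset ℕ) : Prop :=
  ∃ a ∈ P, ∃ B : Finset ℕ, 2 ≤ B.card ∧ (∀ b ∈ B, 0 < b ∧ b ∉ P) ∧ B.sum id = a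

/-- The `i`-th largest element (0-based) of `P`. -/
def partDesc (P : Finset ℕ) (i : ℕ) : ℕ := ((P.sort (· ≤ ·)).reverse).getD i 0

/-- Length of the `i`-th row (0-based) of the Young diagram obtained from the numerical
set `ℕ \ P` via the Keith–Nath transformation: the number of east steps (elements of the
numerical set) preceding the north step at the `i`-th largest gap. -/
def knRow (P : Finset ℕ) (i : ℕ) : ℕ :=
  ((Finset.range (partDesc P i)).filter (fun s => s ∉ P)).card

/-- Length of the `j`-th column (0-based) of the Keith–Nath Young diagram. -/
def knCol (P : Finset ℕ) (j : ℕ) : ℕ :=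
  ((Finset.range P.card).filter (fun i => j < knRow P i)).card

/-- Hook length of the cell `(i, j)` (0-based) of the Keith–Nath Young diagram:
arm + leg + 1. -/
def knHook (P : Finset ℕ) (i j : ℕ) : ℕ := knRow P i + knCol P j - i - j - 1

/-- Total number of cells of the Keith–Nath Young diagram. -/
def knCells (P : Finset ℕ) : ℕ := ∑ i ∈ Finset.range P.card, knRow P i

/-- A maximal unrefinable partition of triangular weight `T_n` (largest part `2n-4`,
`n-2` parts, `n-2` missing parts, complement property) has a Keith–Nath Young diagram
with exactly `3n - 3` cells. -/
lemma filter_lt_card (l : List ℕ) (hs : l.Pairwise (· < ·)) (j : ℕ) (hj : j < l.length) :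
    (l.toFinset.filter (· < l[j])).card = j := by
  have hnd : l.Nodup := hs.nodup
  have hset : l.toFinset.filter (· < l[j]) = (l.take j).toFinset := by
    ext x
    simp only [Finset.mem_filter, List.mem_toFinset]
    constructor
    · rintro ⟨hx, hlt⟩
      obtain ⟨k, hk, rfl⟩ := List.mem_iff_getElem.mp hx
      have hkj : k < j := by
        by_contra h
        push_neg at h
        rcases eq_or_lt_of_le h with h' | h'
        · exact absurd hlt (by simp [h'])
        · have := hs.rel_get_of_lt (a := ⟨j, hj⟩) (b := ⟨k, hk⟩) h'
          simp only [List.get_eq_getElem] at this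
          omega
      exact List.mem_take_iff_getElem.mpr ⟨k, by omega, rfl⟩
    · intro hx
      obtain ⟨k, hk, rfl⟩ := List.mem_take_iff_getElem.mp hx
      have hk' : k < j := by simp at hk; omega
      have hkl : k < l.length := by omega
      refine ⟨List.getElem_mem _, ?_⟩
      exact hs.rel_get_of_lt (a := ⟨k, hkl⟩) (b := ⟨j, hj⟩) hk'
  rw [hset, List.toFinset_card_of_nodup (hnd.take (i := j)), List.length_take]
  omega

theorem stmt9 (P : Finset ℕ) (n : ℕ) (hn : 6 ≤ n) (hne : P.Nonempty)
    (hpos : ∀ p ∈ P, 0 < p) (hunref : ¬ Refinable P)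
    (hsum : P.sum id = n * (n + 1) / 2)
    (hmax : P.max' hne = 2 * n - 4) (hcard : P.card = n - 2)
    (hmiss : ((Finset.Icc 1 (P.max' hne)) \ P).card = n - 2)
    (hnmem : n - 2 ∉ P)
    (hcompl : ∀ x : ℕ, 0 < x → x ≤ 2 * n - 4 → x ≠ n - 2 →
      (x ∈ P ↔ 2 * n - 4 - x ∉ P)) :
    knCells P = 3 * n - 3 := by
  classical
  set t := P.card with ht
  set l := P.sort (· ≤ ·) with hl
  have hlen : l.length = t := P.length_sort _
  have hs : l.Pairwise (· < ·) := P.sortedLT_sort.pairwise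
  have htf : l.toFinset = P := P.sort_toFinset _
  -- j ≤ l[j]
  have hge : ∀ j : ℕ, ∀ hj : j < l.length, j ≤ l[j] := by
    intro j
    induction j with
    | zero => intro _; omega
    | succ k ih =>
      intro hj
      have hk : k < l.length := by omega
      have := hs.rel_get_of_lt (a := ⟨k, hk⟩) (b := ⟨k + 1, hj⟩) (by simp)
      simp only [List.get_eq_getElem] at this
      have := ih hk
      omega
  -- knRow formula
  have hrow : ∀ i ∈ Finset.range t, knRow P i = l.getD (t - 1 - i) 0 - (t - 1 - i) := by
    intro i hi
    rw [Finset.mem_range] at hi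
    have hj : t - 1 - i < l.length := by omega
    have hpd : partDesc P i = l[t - 1 - i] := by
      unfold partDesc
      rw [← hl, List.getD_eq_getElem _ 0 (by rw [List.length_reverse]; omega),
        List.getElem_reverse]
      congr 1
      omega
    have hsplit := Finset.card_filter_add_card_filter_not
      (s := Finset.range (partDesc P i)) (p := fun s => s ∉ P)
    have hfeq : (Finset.range (partDesc P i)).filter (fun s => ¬ s ∉ P)
        = P.filter (· < partDesc P i) := by
      ext x
      simp only [Finset.mem_filter, Finset.mem_range, not_not]
      tauto
    have hcnt : (P.filter (· < partDesc P i)).card = t - 1 - i := by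
      rw [hpd, ← htf]
      exact filter_lt_card l hs _ hj
    rw [List.getD_eq_getElem _ 0 hj]
    unfold knRow
    rw [hfeq, hcnt] at hsplit
    rw [Finset.card_range] at hsplit
    rw [hpd] at hsplit ⊢
    omega
  have hcells : knCells P = ∑ j ∈ Finset.range t, (l.getD j 0 - j) := by
    unfold knCells
    rw [← ht, Finset.sum_congr rfl hrow]
    exact Finset.sum_range_reflect (fun j => l.getD j 0 - j) t
  rw [hcells, Finset.sum_tsub_distrib _ (by
    intro j hj
    rw [Finset.mem_range] at hj
    rw [List.getD_eq_getElem _ 0 (by omega)]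
    exact hge j (by omega))]
  have hsum1 : ∑ j ∈ Finset.range t, l.getD j 0 = P.sum id := by
    have h1 : l.sum = P.sum id := by
      rw [← Finset.sum_map_toList P id, List.map_id]
      exact (Finset.sort_perm_toList P _).sum_eq
    rw [← h1, ← hlen, ← Fin.sum_univ_eq_sum_range (fun j => l.getD j 0) l.length,
      show (∑ i : Fin l.length, l.getD i 0) = ∑ i : Fin l.length, l.get i from
        Finset.sum_congr rfl fun i _ => by rw [List.getD_eq_getElem _ 0 i.isLt]; rfl,
      ← List.sum_ofFn, List.ofFn_get]
  rw [hsum1, hsum, Finset.sum_range_id, hcard]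
  obtain ⟨m, rfl⟩ : ∃ m, n = m + 6 := ⟨n - 6, by omega⟩
  have e1 : (m + 6) * (m + 6 + 1) = m * m + 13 * m + 42 := by ring
  have e2 : (m + 6 - 2) * ((m + 6 - 2) - 1) = m * m + 7 * m + 12 := by
    rw [show m + 6 - 2 = m + 4 from by omega, show m + 4 - 1 = m + 3 from by omega]; ring
  rw [e1, e2]
  obtain ⟨a, ha⟩ : ∃ a, m * m = a := ⟨_, rfl⟩
  rw [ha]
  omega
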